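/- arXiv:1402.5211 — 3 statements merged into one kernel-verified Lean document; each statement's English description precedes it below -/
import Mathlib

section
/- For n ≥ 3, there are exactly n permutations of {1,...,n} avoiding all of the consecutive patterns 321, 312, 213, and their inversion numbers are exactly 0, 1, 2, ..., n−1 (each achieved once), so the inversion generating polynomial equals 1 + q + q^2 + ⋯ + q^{n−1}. -/
open Polynomial
open scoped Classical

/-- The number of inversions of a permutation of `{1,…,n}` (as a permutation of `Fin n`). -/
def inversions {n : ℕ} (π : Equiv.Perm (Fin n)) : ℕ :=
  (Finset.univ.filter (fun p : Fin n × Fin n => p.1 < p.2 ∧ π p.2 < π p.1)).card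

/-- `π` avoids, as a consecutive pattern, the length-3 pattern described by the
order relation `pat` on three consecutive entries. -/
def AvoidsC {n : ℕ} (pat : ℕ → ℕ → ℕ → Prop) (π : Equiv.Perm (Fin n)) : Prop :=
  ∀ i : Fin n, ∀ h : (i : ℕ) + 2 < n,
    ¬ pat (π i) (π ⟨(i : ℕ) + 1, by omega⟩) (π ⟨(i : ℕ) + 2, h⟩)

def P321 (a b c : ℕ) : Prop := c < b ∧ b < a
def P312 (a b c : ℕ) : Prop := b < c ∧ c < a
def P231 (a b c : ℕ) : Prop := c < a ∧ a < b
def P213 (a b c : ℕ) : Prop := b < a ∧ a < c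
def P132 (a b c : ℕ) : Prop := a < c ∧ c < b
def P123 (a b c : ℕ) : Prop := a < b ∧ b < c

/-- The inversion generating polynomial `Σ_{π ∈ A} q^{inv(π)}`. -/
noncomputable def genPoly {n : ℕ} (A : Finset (Equiv.Perm (Fin n))) : Polynomial ℕ :=
  ∑ π ∈ A, X ^ inversions π

noncomputable def Av9 (n : ℕ) : Finset (Equiv.Perm (Fin n)) :=
  Finset.univ.filter (fun π => AvoidsC P321 π ∧ AvoidsC P312 π ∧ AvoidsC P213 π)

/-! ### Auxiliary construction -/

/-- Value function for the permutation that is increasing on the first `n-1`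
positions and has value `k` at the last position. -/
def sigv (n k i : ℕ) : ℕ := if i = n - 1 then k else if i < k then i else i + 1

lemma sigv_lt {n k i : ℕ} (hk : k < n) (hi : i < n) : sigv n k i < n := by
  unfold sigv; split_ifs <;> omega

/-- The permutation increasing on the first `n-1` positions with last value `k`. -/
noncomputable def sig {n : ℕ} (k : Fin n) : Equiv.Perm (Fin n) :=
  Equiv.ofBijective (fun i => ⟨sigv n k i, sigv_lt k.isLt i.isLt⟩)
    (Finite.injective_iff_bijective.mp (by
      intro a b hab
      have ha := a.isLt; have hb := b.isLt; have hk := k.isLt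
      have h : sigv n (k : ℕ) a = sigv n (k : ℕ) b := congrArg Fin.val hab
      apply Fin.ext
      unfold sigv at h
      split_ifs at h <;> omega))

lemma sig_apply {n : ℕ} (k : Fin n) (i : Fin n) :
    ((sig k i : Fin n) : ℕ) = sigv n (k : ℕ) (i : ℕ) := rfl

lemma sig_inj {n : ℕ} : Function.Injective (sig (n := n)) := by
  intro a b h
  have hn : 0 < n := a.pos
  have h3 : sig a ⟨n - 1, by omega⟩ = sig b ⟨n - 1, by omega⟩ := by rw [h]
  have h2 : sigv n (a : ℕ) (n - 1) = sigv n (b : ℕ) (n - 1) := congrArg Fin.val h3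
  unfold sigv at h2
  rw [if_pos rfl, if_pos rfl] at h2
  exact Fin.ext h2

lemma sig_mem {n : ℕ} (k : Fin n) : sig k ∈ Av9 n := by
  have hk := k.isLt
  have key : ∀ (i : ℕ) (p1 : i < n) (p2 : i + 1 < n), i + 2 < n →
      ((sig k ⟨i, p1⟩ : Fin n) : ℕ) < ((sig k ⟨i + 1, p2⟩ : Fin n) : ℕ) := by
    intro i p1 p2 h
    show sigv n (k : ℕ) i < sigv n (k : ℕ) (i + 1)
    unfold sigv
    split_ifs <;> omega
  rw [Av9, Finset.mem_filter]
  refine ⟨Finset.mem_univ _, ?_, ?_, ?_⟩ <;> intro i h hp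
  · exact absurd hp.2 (lt_asymm (key i i.isLt (by omega) (by simpa using h)))
  · exact lt_irrefl _ (((key i i.isLt (by omega) (by simpa using h)).trans hp.1).trans hp.2)
  · exact absurd hp.1 (lt_asymm (key i i.isLt (by omega) (by simpa using h)))

lemma growth (f : ℕ → ℕ) (n : ℕ) (hA : ∀ i, i + 2 < n → f i < f (i + 1)) :
    ∀ d i, i + d + 2 ≤ n → f i + d ≤ f (i + d) := by
  intro d
  induction d with
  | zero => intro i _; simp
  | succ d ih =>
    intro i h
    have h1 := ih i (by omega)
    have h2 := hA (i + d) (by omega)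
    have e : i + (d + 1) = (i + d) + 1 := by omega
    rw [e]
    omega

lemma mem_sig {n : ℕ} (hn : 3 ≤ n) {π : Equiv.Perm (Fin n)} (hπ : π ∈ Av9 n) :
    ∃ k : Fin n, π = sig k := by
  rw [Av9, Finset.mem_filter] at hπ
  obtain ⟨-, h321, h312, h213⟩ := hπ
  set f : ℕ → ℕ := fun i => if h : i < n then ((π ⟨i, h⟩ : Fin n) : ℕ) else 0 with hf
  have hval : ∀ (i : ℕ) (h : i < n), f i = ((π ⟨i, h⟩ : Fin n) : ℕ) := fun i h => dif_pos h
  have hlt : ∀ i, i < n → f i < n := by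
    intro i h; rw [hval i h]; exact (π _).isLt
  have hinj : ∀ i j, i < n → j < n → f i = f j → i = j := by
    intro i j hi hj hfe
    rw [hval i hi, hval j hj] at hfe
    exact congrArg Fin.val (π.injective (Fin.ext hfe))
  have hadj : ∀ i, i + 2 < n → f i < f (i + 1) := by
    intro i h
    have p1 : i < n := by omega
    have p2 : i + 1 < n := by omega
    have p3 : i + 2 < n := h
    have H321 := h321 ⟨i, p1⟩ h
    have H312 := h312 ⟨i, p1⟩ h
    have H213 := h213 ⟨i, p1⟩ h
    rw [hval i p1, hval (i + 1) p2]
    rcases lt_trichotomy ((π ⟨i + 1, p2⟩ : Fin n) : ℕ) ((π ⟨i, p1⟩ : Fin n) : ℕ) with hba | he | hab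
    · exfalso
      rcases lt_trichotomy ((π ⟨i + 2, p3⟩ : Fin n) : ℕ) ((π ⟨i + 1, p2⟩ : Fin n) : ℕ) with c1 | c2 | c3
      · exact H321 ⟨c1, hba⟩
      · have hcc : i + 2 = i + 1 := congrArg Fin.val (π.injective (Fin.ext c2))
        omega
      · rcases lt_trichotomy ((π ⟨i + 2, p3⟩ : Fin n) : ℕ) ((π ⟨i, p1⟩ : Fin n) : ℕ) with d1 | d2 | d3
        · exact H312 ⟨c3, d1⟩
        · have hcc : i + 2 = i := congrArg Fin.val (π.injective (Fin.ext d2))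
          omega
        · exact H213 ⟨hba, d3⟩
    · exfalso
      have hcc : i + 1 = i := congrArg Fin.val (π.injective (Fin.ext he))
      omega
    · exact hab
  have hgrow := growth f n hadj
  have hlow : ∀ i, i + 2 ≤ n → i ≤ f i := by
    intro i h
    have := hgrow i 0 (by omega)
    simp only [Nat.zero_add] at this
    omega
  have hupp : ∀ i, i + 2 ≤ n → f i ≤ i + 1 := by
    intro i h
    rcases eq_or_lt_of_le h with he | hl
    · have := hlt i (by omega); omega
    · have h1 := hgrow (n - 2 - i) i (by omega)
      have h2 := hlt (i + (n - 2 - i)) (by omega)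
      omega
  set k := f (n - 1) with hk
  have hkn : k < n := hlt (n - 1) (by omega)
  have hne : ∀ i, i < n - 1 → f i ≠ k := by
    intro i hi e
    have := hinj i (n - 1) (by omega) (by omega) e
    omega
  have hge : ∀ i, k ≤ i → i + 2 ≤ n → f i = i + 1 := by
    intro i hki
    induction i, hki using Nat.le_induction with
    | base =>
      intro h
      have h1 := hlow k (by omega)
      have h2 := hupp k (by omega)
      have h3 := hne k (by omega)
      omega
    | succ i hki ih =>
      intro h
      have h1 := ih (by omega)
      have h2 := hadj i (by omega)
      have h3 := hupp (i + 1) (by omega)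
      omega
  have hltk : ∀ i, i < k → f i = i := by
    have hd : ∀ d, d < k → f (k - 1 - d) = k - 1 - d := by
      intro d
      induction d with
      | zero =>
        intro h
        have h1 := hlow (k - 1) (by omega)
        have h2 := hupp (k - 1) (by omega)
        have h3 := hne (k - 1) (by omega)
        simp only [Nat.sub_zero]
        omega
      | succ d ih =>
        intro h
        have h1 := ih (by omega)
        have h2 := hadj (k - 2 - d) (by omega)
        have h3 := hlow (k - 2 - d) (by omega)
        have e : k - 1 - (d + 1) = k - 2 - d := by omega
        have e2 : k - 2 - d + 1 = k - 1 - d := by omega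
        rw [e]
        rw [e2] at h2
        omega
    intro i hik
    have h1 := hd (k - 1 - i) (by omega)
    have e : k - 1 - (k - 1 - i) = i := by omega
    rw [e] at h1
    exact h1
  refine ⟨⟨k, hkn⟩, ?_⟩
  apply Equiv.ext
  intro i
  apply Fin.ext
  have hiv := i.isLt
  have hfi : f (i : ℕ) = ((π i : Fin n) : ℕ) := hval (i : ℕ) i.isLt
  rw [show ((sig ⟨k, hkn⟩ i : Fin n) : ℕ) = sigv n k (i : ℕ) from rfl]
  unfold sigv
  split_ifs with h1 h2
  · rw [← hfi, h1]
  · rw [← hfi]; exact hltk (i : ℕ) h2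
  · rw [← hfi]; exact hge (i : ℕ) (by omega) (by omega)

lemma av9_eq {n : ℕ} (hn : 3 ≤ n) : Av9 n = Finset.image sig Finset.univ := by
  ext π
  constructor
  · intro h
    obtain ⟨k, rfl⟩ := mem_sig hn h
    exact Finset.mem_image.mpr ⟨k, Finset.mem_univ _, rfl⟩
  · intro h
    obtain ⟨k, -, rfl⟩ := Finset.mem_image.mp h
    exact sig_mem k

lemma mem_invset {n : ℕ} (k : Fin n) (a b : Fin n) :
    (a < b ∧ sig k b < sig k a) ↔
      ((b : ℕ) = n - 1 ∧ (k : ℕ) ≤ (a : ℕ) ∧ (a : ℕ) < n - 1) := by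
  have h1 := a.isLt; have h2 := b.isLt; have hk := k.isLt
  show ((a : ℕ) < (b : ℕ) ∧ sigv n (k : ℕ) (b : ℕ) < sigv n (k : ℕ) (a : ℕ)) ↔ _
  unfold sigv
  split_ifs <;> omega

lemma inv_sig {n : ℕ} (k : Fin n) : inversions (sig k) = n - 1 - (k : ℕ) := by
  have hk := k.isLt
  have hn : 0 < n := by omega
  unfold inversions
  have hset : (Finset.univ.filter (fun p : Fin n × Fin n => p.1 < p.2 ∧ sig k p.2 < sig k p.1))
      = (Finset.univ.filter (fun i : Fin n => (k : ℕ) ≤ (i : ℕ) ∧ (i : ℕ) < n - 1)).image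
          (fun i => (i, (⟨n - 1, by omega⟩ : Fin n))) := by
    ext ⟨a, b⟩
    simp only [Finset.mem_filter, Finset.mem_univ, true_and, Finset.mem_image]
    rw [mem_invset]
    constructor
    · rintro ⟨h1, h2, h3⟩
      refine ⟨a, ⟨h2, h3⟩, ?_⟩
      rw [Prod.mk.injEq]
      exact ⟨rfl, Fin.ext h1.symm⟩
    · rintro ⟨i, ⟨h2, h3⟩, he⟩
      rw [Prod.mk.injEq] at he
      obtain ⟨rfl, rfl⟩ := he
      exact ⟨rfl, h2, h3⟩
  rw [hset, Finset.card_image_of_injective _ (fun a b h => congrArg Prod.fst h)]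
  rw [Finset.card_filter]
  rw [Fin.sum_univ_eq_sum_range (fun i => if (k : ℕ) ≤ i ∧ i < n - 1 then 1 else 0) n]
  rw [← Finset.card_filter]
  have he : (Finset.range n).filter (fun i => (k : ℕ) ≤ i ∧ i < n - 1)
      = Finset.Ico (k : ℕ) (n - 1) := by
    ext i
    simp only [Finset.mem_filter, Finset.mem_range, Finset.mem_Ico]
    omega
  rw [he, Nat.card_Ico]

theorem stmt9 {n : ℕ} (hn : 3 ≤ n) :
    (Av9 n).card = n ∧
    (∀ m : ℕ, ((Av9 n).filter (fun π => inversions π = m)).card =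
      if m ≤ n - 1 then 1 else 0) ∧
    genPoly (Av9 n) = ∑ k ∈ Finset.range n, X ^ k := by
  have himg := av9_eq hn
  refine ⟨?_, ?_, ?_⟩
  · rw [himg, Finset.card_image_of_injective _ sig_inj, Finset.card_univ, Fintype.card_fin]
  · intro m
    rw [himg]
    have hfil : (Finset.image sig Finset.univ).filter (fun π => inversions π = m)
        = Finset.image sig (Finset.univ.filter fun k : Fin n => inversions (sig k) = m) := by
      ext x
      simp only [Finset.mem_filter, Finset.mem_image, Finset.mem_univ, true_and]
      constructor
      · rintro ⟨⟨k, rfl⟩, h⟩; exact ⟨k, h, rfl⟩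
      · rintro ⟨k, h, rfl⟩; exact ⟨⟨k, rfl⟩, h⟩
    rw [hfil, Finset.card_image_of_injective _ sig_inj]
    have hfil2 : (Finset.univ.filter fun k : Fin n => inversions (sig k) = m)
        = Finset.univ.filter fun k : Fin n => n - 1 - (k : ℕ) = m := by
      ext k; simp [inv_sig]
    rw [hfil2]
    by_cases hm : m ≤ n - 1
    · rw [if_pos hm]
      have : (Finset.univ.filter fun k : Fin n => n - 1 - (k : ℕ) = m)
          = {(⟨n - 1 - m, by omega⟩ : Fin n)} := by
        ext k
        have := k.isLt
        simp only [Finset.mem_filter, Finset.mem_univ, true_and, Finset.mem_singleton,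
          Fin.ext_iff]
        omega
      rw [this, Finset.card_singleton]
    · rw [if_neg hm]
      have : (Finset.univ.filter fun k : Fin n => n - 1 - (k : ℕ) = m) = ∅ := by
        ext k
        have := k.isLt
        simp only [Finset.mem_filter, Finset.mem_univ, true_and, Finset.notMem_empty,
          iff_false]
        omega
      rw [this, Finset.card_empty]
  · rw [himg]
    unfold genPoly
    rw [Finset.sum_image (fun a _ b _ h => sig_inj h)]
    have : ∀ k : Fin n, (X : Polynomial ℕ) ^ inversions (sig k) = X ^ (n - 1 - (k : ℕ)) := by
      intro k; rw [inv_sig]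
    rw [Finset.sum_congr rfl (fun k _ => this k)]
    rw [Fin.sum_univ_eq_sum_range (fun k => (X : Polynomial ℕ) ^ (n - 1 - k)) n]
    exact Finset.sum_range_reflect (fun k => (X : Polynomial ℕ) ^ k) n
end

section
/- For n ≥ 4, exactly two permutations of {1,...,n} avoid all of the consecutive patterns 321, 312, 132, 123, and the inversion generating polynomial over this class equals q^{k(k+1)} + q^{k^2} if n = 2k+1 and q^{k(k−1)} + q^{k^2} if n = 2k. -/
open Polynomial
open scoped Classical

noncomputable def Av10 (n : ℕ) : Finset (Equiv.Perm (Fin n)) :=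
  Finset.univ.filter (fun π =>
    AvoidsC P321 π ∧ AvoidsC P312 π ∧ AvoidsC P132 π ∧ AvoidsC P123 π)







def funA (n : ℕ) (i : Fin n) : Fin n :=
  ⟨if i.val % 2 = 0 then (n-1)/2 - i.val/2 else (n-1)/2 + (i.val+1)/2, by
    have := i.isLt; split <;> omega⟩

def gunA (n : ℕ) (v : Fin n) : Fin n :=
  ⟨if v.val ≤ (n-1)/2 then 2*((n-1)/2 - v.val) else 2*(v.val - (n-1)/2) - 1, by
    have := v.isLt; split <;> omega⟩

def permA (n : ℕ) : Equiv.Perm (Fin n) where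
  toFun := funA n
  invFun := gunA n
  left_inv := by
    intro i; have := i.isLt; apply Fin.ext
    simp only [funA, gunA]; split_ifs <;> omega
  right_inv := by
    intro v; have := v.isLt; apply Fin.ext
    simp only [funA, gunA]; split_ifs <;> omega

def funB (n : ℕ) (i : Fin n) : Fin n :=
  ⟨if i.val % 2 = 0 then n/2 + i.val/2 else n/2 - (i.val+1)/2, by
    have := i.isLt; split <;> omega⟩

def gunB (n : ℕ) (v : Fin n) : Fin n :=
  ⟨if n/2 ≤ v.val then 2*(v.val - n/2) else 2*(n/2 - v.val) - 1, by
    have := v.isLt; split <;> omega⟩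

def permB (n : ℕ) : Equiv.Perm (Fin n) where
  toFun := funB n
  invFun := gunB n
  left_inv := by
    intro i; have := i.isLt; apply Fin.ext
    simp only [funB, gunB]; split_ifs <;> omega
  right_inv := by
    intro v; have := v.isLt; apply Fin.ext
    simp only [funB, gunB]; split_ifs <;> omega

def cpl (n : ℕ) : Equiv.Perm (Fin n) where
  toFun i := ⟨n - 1 - i.val, by have := i.isLt; omega⟩
  invFun i := ⟨n - 1 - i.val, by have := i.isLt; omega⟩
  left_inv := by intro i; have := i.isLt; apply Fin.ext; simp; omega
  right_inv := by intro i; have := i.isLt; apply Fin.ext; simp; omega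

lemma permB_eq (n : ℕ) : permB n = (permA n).trans (cpl n) := by
  ext i : 1
  have := i.isLt
  apply Fin.ext
  simp only [permA, permB, cpl, funA, funB, Equiv.trans_apply, Equiv.coe_fn_mk]
  split_ifs <;> omega

lemma memA (n : ℕ) : AvoidsC P321 (permA n) ∧ AvoidsC P312 (permA n)
    ∧ AvoidsC P132 (permA n) ∧ AvoidsC P123 (permA n) := by
  refine ⟨?_, ?_, ?_, ?_⟩ <;>
  · intro i h hP
    obtain ⟨h1, h2⟩ := hP
    simp only [permA, Equiv.coe_fn_mk, funA, P321, P312, P132, P123] at h1 h2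
    split_ifs at h1 h2 <;> omega

lemma memB (n : ℕ) : AvoidsC P321 (permB n) ∧ AvoidsC P312 (permB n)
    ∧ AvoidsC P132 (permB n) ∧ AvoidsC P123 (permB n) := by
  refine ⟨?_, ?_, ?_, ?_⟩ <;>
  · intro i h hP
    obtain ⟨h1, h2⟩ := hP
    simp only [permB, Equiv.coe_fn_mk, funB, P321, P312, P132, P123] at h1 h2
    split_ifs at h1 h2 <;> omega

lemma AneB {n : ℕ} (hn : 4 ≤ n) : permA n ≠ permB n := by
  intro h
  have h1 : permA n ⟨1, by omega⟩ = permB n ⟨1, by omega⟩ := by rw [h]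
  have h2 : (permA n ⟨1, by omega⟩ : ℕ) = (permB n ⟨1, by omega⟩ : ℕ) :=
    congrArg Fin.val h1
  simp only [permA, permB, funA, funB, Equiv.coe_fn_mk] at h2
  norm_num at h2
  omega

-- inversion counts
def evsum (n : ℕ) : ℕ := ∑ j ∈ Finset.range n, if j % 2 = 0 then j else 0
def odsum (n : ℕ) : ℕ := ∑ j ∈ Finset.range n, if j % 2 = 1 then j else 0

lemma sum_lt_ind (N t : ℕ) (h : t ≤ N) :
    (∑ i ∈ Finset.range N, if i < t then 1 else 0) = t := by
  induction N with
  | zero => simp; omega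
  | succ m ih =>
    rw [Finset.sum_range_succ]
    by_cases hm : t ≤ m
    · rw [ih hm, if_neg (by omega)]
      omega
    · have ht : t = m + 1 := by omega
      subst ht
      have hall : ∀ x ∈ Finset.range m, (if x < m + 1 then 1 else 0) = 1 := by
        intro x hx
        exact if_pos (by have := Finset.mem_range.mp hx; omega)
      rw [Finset.sum_congr rfl hall, Finset.sum_const, smul_eq_mul, mul_one,
        Finset.card_range, if_pos (by omega)]

lemma inv_count {n : ℕ} (π : Equiv.Perm (Fin n)) (r : ℕ)
    (key : ∀ i j : Fin n, (i < j ∧ π j < π i) ↔ (i < j ∧ j.val % 2 = r)) :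
    inversions π = ∑ j ∈ Finset.range n, if j % 2 = r then j else 0 := by
  unfold inversions
  rw [Finset.card_filter, Fintype.sum_prod_type, Finset.sum_comm]
  have step1 : ∀ j : Fin n,
      (∑ i : Fin n, if (i < j ∧ π j < π i) then 1 else 0)
        = if j.val % 2 = r then j.val else 0 := by
    intro j
    by_cases hj : j.val % 2 = r
    · rw [if_pos hj]
      have e1 : ∀ i : Fin n, (if (i < j ∧ π j < π i) then 1 else 0)
          = if (i.val < j.val) then 1 else 0 := by
        intro i
        refine if_congr ?_ rfl rfl
        rw [key i j]
        exact ⟨fun h => h.1, fun h => ⟨h, hj⟩⟩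
      rw [Finset.sum_congr rfl (fun i _ => e1 i)]
      rw [Fin.sum_univ_eq_sum_range (fun i => if i < j.val then 1 else 0) n]
      exact sum_lt_ind n j.val (le_of_lt j.isLt)
    · rw [if_neg hj]
      have e1 : ∀ i : Fin n, (if (i < j ∧ π j < π i) then 1 else 0) = 0 := by
        intro i
        rw [if_neg]
        rw [key i j]
        tauto
      rw [Finset.sum_congr rfl (fun i _ => e1 i), Finset.sum_const, smul_eq_mul, mul_zero]
  rw [Finset.sum_congr rfl (fun j _ => step1 j)]
  exact Fin.sum_univ_eq_sum_range (fun j => if j % 2 = r then j else 0) n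

lemma invA (n : ℕ) : inversions (permA n) = evsum n := by
  apply inv_count
  intro i j
  have hi := i.isLt
  have hj := j.isLt
  simp only [permA, Equiv.coe_fn_mk, funA, Fin.lt_def]
  constructor
  · rintro ⟨h1, h2⟩
    refine ⟨h1, ?_⟩
    split_ifs at h2 <;> omega
  · rintro ⟨h1, h2⟩
    refine ⟨h1, ?_⟩
    split_ifs <;> omega

lemma invB (n : ℕ) : inversions (permB n) = odsum n := by
  apply inv_count
  intro i j
  have hi := i.isLt
  have hj := j.isLt
  simp only [permB, Equiv.coe_fn_mk, funB, Fin.lt_def]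
  constructor
  · rintro ⟨h1, h2⟩
    refine ⟨h1, ?_⟩
    split_ifs at h2 <;> omega
  · rintro ⟨h1, h2⟩
    refine ⟨h1, ?_⟩
    split_ifs <;> omega

lemma evsum_succ (m : ℕ) : evsum (m+1) = evsum m + if m % 2 = 0 then m else 0 :=
  Finset.sum_range_succ _ m
lemma odsum_succ (m : ℕ) : odsum (m+1) = odsum m + if m % 2 = 1 then m else 0 :=
  Finset.sum_range_succ _ m

lemma evsum_even (k : ℕ) : evsum (2*k) = k*(k-1) := by
  induction k with
  | zero => simp [evsum]
  | succ m ih =>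
    rw [show 2*(m+1) = 2*m+1+1 by ring, evsum_succ, evsum_succ, ih,
      if_pos (by omega), if_neg (by omega)]
    simp only [Nat.add_sub_cancel]
    cases m with
    | zero => simp
    | succ p => simp only [Nat.add_sub_cancel]; ring

lemma evsum_odd (k : ℕ) : evsum (2*k+1) = k*(k+1) := by
  rw [evsum_succ, evsum_even, if_pos (by omega)]
  cases k with
  | zero => simp
  | succ p => simp only [Nat.add_sub_cancel]; ring

lemma odsum_even (k : ℕ) : odsum (2*k) = k*k := by
  induction k with
  | zero => simp [odsum]
  | succ m ih =>
    rw [show 2*(m+1) = 2*m+1+1 by ring, odsum_succ, odsum_succ, ih,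
      if_neg (by omega), if_pos (by omega)]
    ring

lemma odsum_odd (k : ℕ) : odsum (2*k+1) = k*k := by
  rw [odsum_succ, odsum_even, if_neg (by omega)]
  omega

def vOf {n : ℕ} (π : Equiv.Perm (Fin n)) (i : ℕ) : ℕ :=
  if h : i < n then (π ⟨i, h⟩ : ℕ) else 0


lemma uniq_asc {n : ℕ} (hn : 4 ≤ n) (π : Equiv.Perm (Fin n))
    (h321 : AvoidsC P321 π) (h312 : AvoidsC P312 π)
    (h132 : AvoidsC P132 π) (h123 : AvoidsC P123 π)
    (hasc : (π ⟨0, by omega⟩ : ℕ) < π ⟨1, by omega⟩) : π = permA n := by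
  have hv : ∀ i (h : i < n), vOf π i = (π ⟨i, h⟩ : ℕ) := by
    intro i h; simp [vOf, dif_pos h]
  have hinj : ∀ i j, i < n → j < n → vOf π i = vOf π j → i = j := by
    intro i j hi hj hij
    rw [hv i hi, hv j hj] at hij
    exact congrArg Fin.val (π.injective (Fin.val_injective hij))
  have hstep : ∀ i, i + 2 < n →
      (vOf π i < vOf π (i+1) → vOf π (i+2) < vOf π i ∧ vOf π i < vOf π (i+1)) ∧
      (vOf π (i+1) < vOf π i → vOf π i < vOf π (i+2) ∧ vOf π (i+1) < vOf π i) := by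
    intro i h2
    have H321 := h321 ⟨i, by omega⟩ h2
    have H312 := h312 ⟨i, by omega⟩ h2
    have H132 := h132 ⟨i, by omega⟩ h2
    have H123 := h123 ⟨i, by omega⟩ h2
    simp only [P321, P312, P132, P123] at H321 H312 H132 H123
    rw [← hv i (by omega), ← hv (i+1) (by omega), ← hv (i+2) (by omega)]
      at H321 H312 H132 H123
    have hne02 : ¬ (vOf π i = vOf π (i+2)) := fun hh => by
      have := hinj i (i+2) (by omega) (by omega) hh; omega
    have hne01 : ¬ (vOf π i = vOf π (i+1)) := fun hh => by
      have := hinj i (i+1) (by omega) (by omega) hh; omega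
    have hne12 : ¬ (vOf π (i+1) = vOf π (i+2)) := fun hh => by
      have := hinj (i+1) (i+2) (by omega) (by omega) hh; omega
    constructor <;> intro h <;> constructor <;> omega
  have halt : ∀ i, i + 1 < n →
      (i % 2 = 0 → vOf π i < vOf π (i+1)) ∧ (i % 2 = 1 → vOf π (i+1) < vOf π i) := by
    intro i
    induction i with
    | zero =>
      intro h1
      refine ⟨fun _ => ?_, fun h => by omega⟩
      rw [hv 0 (by omega), hv 1 (by omega)]; exact hasc
    | succ m ih =>
      intro h1
      have hm := ih (by omega)
      have hs := hstep m (by omega)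
      rw [show m+1+1 = m+2 from rfl]
      rcases Nat.even_or_odd m with he | ho
      · have hme : m % 2 = 0 := Nat.even_iff.mp he
        have := hs.1 (hm.1 hme)
        exact ⟨fun hh => by omega, fun _ => by omega⟩
      · have hmo : m % 2 = 1 := Nat.odd_iff.mp ho
        have := hs.2 (hm.2 hmo)
        exact ⟨fun _ => by omega, fun hh => by omega⟩
  have chainE : ∀ i m, 2*i + 2*m + 2 < n → vOf π (2*i + 2*m + 2) < vOf π (2*i) := by
    intro i m
    induction m with
    | zero =>
      intro h
      rw [show 2*i + 2*0 + 2 = 2*i + 2 by ring]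
      have := (hstep (2*i) (by omega)).1 ((halt (2*i) (by omega)).1 (by omega))
      omega
    | succ p ih =>
      intro h
      have h1 := ih (by omega)
      have h2 := (hstep (2*(i+p+1)) (by omega)).1
        ((halt (2*(i+p+1)) (by omega)).1 (by omega))
      rw [show 2*(i+p+1) = 2*i + 2*p + 2 by ring] at h2
      rw [show 2*i + 2*(p+1) + 2 = 2*i + 2*p + 2 + 2 by ring]
      omega
  have chainO : ∀ i m, 2*i + 2*m + 3 < n → vOf π (2*i + 1) < vOf π (2*i + 2*m + 3) := by
    intro i m
    induction m with
    | zero =>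
      intro h
      rw [show 2*i + 2*0 + 3 = 2*i + 1 + 2 by ring]
      have := (hstep (2*i+1) (by omega)).2 ((halt (2*i+1) (by omega)).2 (by omega))
      omega
    | succ p ih =>
      intro h
      have h1 := ih (by omega)
      have h2 := (hstep (2*i + 2*p + 3) (by omega)).2
        ((halt (2*i + 2*p + 3) (by omega)).2 (by omega))
      rw [show 2*i + 2*(p+1) + 3 = 2*i + 2*p + 3 + 2 by ring]
      omega
  have chainE' : ∀ i j, i < j → 2*j < n → vOf π (2*j) < vOf π (2*i) := by
    intro i j hij hj
    have := chainE i (j - i - 1) (by omega)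
    rw [show 2*i + 2*(j-i-1) + 2 = 2*j by omega] at this
    exact this
  have chainO' : ∀ i j, i < j → 2*j + 1 < n → vOf π (2*i+1) < vOf π (2*j+1) := by
    intro i j hij hj
    have := chainO i (j - i - 1) (by omega)
    rw [show 2*i + 2*(j-i-1) + 3 = 2*j + 1 by omega] at this
    exact this
  have cross : ∀ i j, 2*i < n → 2*j + 1 < n → vOf π (2*i) < vOf π (2*j+1) := by
    intro i j hi hj
    rcases Nat.lt_trichotomy i j with h | h | h
    · have h1 := (halt (2*i) (by omega)).1 (by omega)
      have h2 := chainO' i j h (by omega)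
      omega
    · subst h
      exact (halt (2*i) (by omega)).1 (by omega)
    · have h1 := chainE' j i h (by omega)
      have h2 := (halt (2*j) (by omega)).1 (by omega)
      omega
  set σ : Equiv.Perm (Fin n) := (permA n).symm.trans π with hσdef
  have hσv : ∀ x : Fin n, (σ x : ℕ) =
      vOf π (if x.val ≤ (n-1)/2 then 2*((n-1)/2 - x.val) else 2*(x.val - (n-1)/2) - 1) := by
    intro x
    have hx := x.isLt
    have hg : (permA n).symm x = gunA n x := rfl
    rw [hσdef]
    simp only [Equiv.trans_apply, hg, gunA]
    split_ifs with h
    · rw [hv _ (by omega)]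
    · rw [hv _ (by omega)]
  have hmono : StrictMono ⇑σ := by
    intro a b hab
    have ha := a.isLt
    have hb := b.isLt
    have hab' : a.val < b.val := hab
    rw [Fin.lt_def, hσv a, hσv b]
    split_ifs with h1 h2 h2
    · exact chainE' ((n-1)/2 - b.val) ((n-1)/2 - a.val) (by omega) (by omega)
    · rw [show 2*(b.val - (n-1)/2) - 1 = 2*(b.val - (n-1)/2 - 1) + 1 by omega]
      exact cross ((n-1)/2 - a.val) (b.val - (n-1)/2 - 1) (by omega) (by omega)
    · exact absurd hab' (by omega)
    · rw [show 2*(a.val - (n-1)/2) - 1 = 2*(a.val - (n-1)/2 - 1) + 1 by omega,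
          show 2*(b.val - (n-1)/2) - 1 = 2*(b.val - (n-1)/2 - 1) + 1 by omega]
      exact chainO' (a.val - (n-1)/2 - 1) (b.val - (n-1)/2 - 1) (by omega) (by omega)
  have hmono' : StrictMono ⇑σ.symm := by
    intro x y hxy
    rw [← σ.apply_symm_apply x, ← σ.apply_symm_apply y] at hxy
    exact hmono.lt_iff_lt.mp hxy
  haveI : WellFoundedLT (Fin n) := Finite.to_wellFoundedLT
  have hid : ∀ x : Fin n, σ x = x := by
    intro x
    have h1 : x ≤ σ x := hmono.le_apply
    have h2 : σ x ≤ x := by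
      have := hmono'.le_apply (x := σ x)
      simpa using this
    exact le_antisymm h2 h1
  ext i : 1
  have := hid (permA n i)
  rw [hσdef] at this
  simpa using this


lemma uniq {n : ℕ} (hn : 4 ≤ n) (π : Equiv.Perm (Fin n))
    (h321 : AvoidsC P321 π) (h312 : AvoidsC P312 π)
    (h132 : AvoidsC P132 π) (h123 : AvoidsC P123 π) :
    π = permA n ∨ π = permB n := by
  rcases Nat.lt_trichotomy ((π ⟨0, by omega⟩ : Fin n) : ℕ) ((π ⟨1, by omega⟩ : Fin n) : ℕ)
    with h | h | h
  · exact Or.inl (uniq_asc hn π h321 h312 h132 h123 h)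
  · exfalso
    have : (⟨0, by omega⟩ : Fin n) = ⟨1, by omega⟩ := π.injective (Fin.val_injective h)
    simp at this
  · right
    set π' : Equiv.Perm (Fin n) := π.trans (cpl n) with hπ'
    have e : ∀ x : Fin n, (π' x : ℕ) = n - 1 - (π x : ℕ) := by
      intro x; rw [hπ']; rfl
    have key : ∀ (P Q : ℕ → ℕ → ℕ → Prop),
        (∀ a b c, a < n → b < n → c < n → P (n-1-a) (n-1-b) (n-1-c) → Q a b c) →
        AvoidsC Q π → AvoidsC P π' := by
      intro P Q himp hQ i hi hP
      rw [e, e, e] at hP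
      exact hQ i hi (himp _ _ _ (π _).isLt (π _).isLt (π _).isLt hP)
    have a321 : AvoidsC P321 π' := key _ _ (fun a b c ha hb hc hp => by
      simp only [P321, P123] at *; omega) h123
    have a312 : AvoidsC P312 π' := key _ _ (fun a b c ha hb hc hp => by
      simp only [P312, P132] at *; omega) h132
    have a132 : AvoidsC P132 π' := key _ _ (fun a b c ha hb hc hp => by
      simp only [P132, P312] at *; omega) h312
    have a123 : AvoidsC P123 π' := key _ _ (fun a b c ha hb hc hp => by
      simp only [P123, P321] at *; omega) h321
    have hasc' : (π' ⟨0, by omega⟩ : ℕ) < (π' ⟨1, by omega⟩ : ℕ) := by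
      rw [e, e]
      have h0 := (π ⟨0, by omega⟩).isLt
      have h1 := (π ⟨1, by omega⟩).isLt
      omega
    have hA := uniq_asc hn π' a321 a312 a132 a123 hasc'
    rw [permB_eq, ← hA]
    ext x : 1
    apply Fin.ext
    rw [hπ']
    simp only [Equiv.trans_apply]
    have h1 := (π x).isLt
    have h2 := (cpl n (π x)).isLt
    show ((π x : Fin n) : ℕ) = ((cpl n) ((cpl n) (π x)) : ℕ)
    simp only [cpl, Equiv.coe_fn_mk]
    omega

lemma av10_eq {n : ℕ} (hn : 4 ≤ n) : Av10 n = {permA n, permB n} := by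
  ext π
  simp only [Av10, Finset.mem_filter, Finset.mem_univ, true_and, Finset.mem_insert,
    Finset.mem_singleton]
  constructor
  · rintro ⟨a1, a2, a3, a4⟩
    exact uniq hn π a1 a2 a3 a4
  · rintro (rfl | rfl)
    · exact ⟨(memA n).1, (memA n).2.1, (memA n).2.2.1, (memA n).2.2.2⟩
    · exact ⟨(memB n).1, (memB n).2.1, (memB n).2.2.1, (memB n).2.2.2⟩

theorem stmt10 {n : ℕ} (hn : 4 ≤ n) :
    (Av10 n).card = 2 ∧
    ∀ k : ℕ,
      (n = 2 * k + 1 → genPoly (Av10 n) = X ^ (k * (k + 1)) + X ^ (k ^ 2)) ∧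
      (n = 2 * k → genPoly (Av10 n) = X ^ (k * (k - 1)) + X ^ (k ^ 2)) := by
  constructor
  · rw [av10_eq hn]
    exact Finset.card_pair (AneB hn)
  · intro k
    constructor
    · intro hk
      subst hk
      rw [av10_eq hn]
      unfold genPoly
      rw [Finset.sum_pair (AneB hn), invA, invB, evsum_odd, odsum_odd,
        show k^2 = k*k from by ring]
    · intro hk
      subst hk
      rw [av10_eq hn]
      unfold genPoly
      rw [Finset.sum_pair (AneB hn), invA, invB, evsum_even, odsum_even,
        show k^2 = k*k from by ring]
end

section
/- Let I_n(q) = Σ q^{inv(π)} over all permutations π of {1,...,n} that avoid both consecutive patterns 321 and 312. Then for n ≥ 2, I_n(q) = I_{n−1}(q) + (q + q^2 + ⋯ + q^{n−1}) · I_{n−2}(q), with I_0(q) = I_1(q) = 1. -/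
open Polynomial
open scoped Classical

noncomputable def I12 (n : ℕ) : Polynomial ℕ :=
  genPoly (Finset.univ.filter (fun π : Equiv.Perm (Fin n) => AvoidsC P321 π ∧ AvoidsC P312 π))

namespace Inv12

open Finset Equiv Fin

/-- The combined avoidance condition, in positive form. -/
def Good {n : ℕ} (π : Equiv.Perm (Fin n)) : Prop :=
  ∀ i : Fin n, ∀ h : (i : ℕ) + 2 < n,
    ((π i : ℕ) < (π ⟨(i : ℕ) + 1, by omega⟩ : ℕ)) ∨ ((π i : ℕ) < (π ⟨(i : ℕ) + 2, h⟩ : ℕ))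

lemma good_iff {n : ℕ} (π : Equiv.Perm (Fin n)) :
    (AvoidsC P321 π ∧ AvoidsC P312 π) ↔ Good π := by
  constructor
  · rintro ⟨h1, h2⟩ i h
    by_contra hcon
    push_neg at hcon
    obtain ⟨hab, hac⟩ := hcon
    have d1 : (π ⟨(i : ℕ) + 1, by omega⟩ : ℕ) ≠ (π i : ℕ) := fun he =>
      absurd (congrArg Fin.val (π.injective (Fin.ext he))) (by simp)
    have d2 : (π ⟨(i : ℕ) + 2, h⟩ : ℕ) ≠ (π i : ℕ) := fun he =>
      absurd (congrArg Fin.val (π.injective (Fin.ext he))) (by simp)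
    have hba : (π ⟨(i : ℕ) + 1, by omega⟩ : ℕ) < (π i : ℕ) := lt_of_le_of_ne hab d1
    have hca : (π ⟨(i : ℕ) + 2, h⟩ : ℕ) < (π i : ℕ) := lt_of_le_of_ne hac d2
    rcases Nat.lt_or_ge (π ⟨(i : ℕ) + 2, h⟩ : ℕ) (π ⟨(i : ℕ) + 1, by omega⟩ : ℕ) with hbc | hbc
    · exact h1 i h ⟨hbc, hba⟩
    · rcases Nat.lt_or_ge (π ⟨(i : ℕ) + 1, by omega⟩ : ℕ) (π ⟨(i : ℕ) + 2, h⟩ : ℕ) with hbc' | hbc'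
      · exact h2 i h ⟨hbc', hca⟩
      · have : (π ⟨(i : ℕ) + 1, by omega⟩ : ℕ) = (π ⟨(i : ℕ) + 2, h⟩ : ℕ) := le_antisymm hbc hbc'
        have := congrArg Fin.val (π.injective (Fin.ext this))
        simp at this
  · intro hg
    constructor <;> intro i h hc <;> rcases hg i h with hlt | hlt
    · exact absurd hc.2 (lt_asymm hlt)
    · exact absurd (hc.1.trans hc.2) (lt_asymm hlt)
    · exact absurd (hc.1.trans hc.2) (lt_asymm hlt)
    · exact absurd hc.2 (lt_asymm hlt)

lemma inversions_eq_sum {n : ℕ} (π : Equiv.Perm (Fin n)) :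
    inversions π = ∑ q : Fin n, ∑ p : Fin n, if p < q ∧ π q < π p then 1 else 0 := by
  rw [inversions, Finset.card_filter, ← Finset.univ_product_univ, Finset.sum_product_right]

lemma nat_count (J : ℕ) (M : ℕ) :
    (∑ k ∈ Finset.range M, if J ≤ k then 1 else 0) = M - J := by
  induction M with
  | zero => simp
  | succ M ih => rw [Finset.sum_range_succ, ih]; split_ifs with h <;> omega

lemma inversions_small {n : ℕ} (hn : n ≤ 1) (π : Equiv.Perm (Fin n)) : inversions π = 0 := by
  rw [inversions, Finset.card_eq_zero, Finset.filter_eq_empty_iff]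
  intro x _
  rintro ⟨h1, -⟩
  have a := x.1.isLt
  have b := x.2.isLt
  have c : (x.1 : ℕ) < (x.2 : ℕ) := h1
  omega

variable {m : ℕ}

@[simp] lemma not_last_lt {n : ℕ} (y : Fin (n + 1)) : ¬ (Fin.last n < y) :=
  not_lt.mpr (Fin.le_last y)

lemma sa_lt_iff (j : Fin (m + 1)) (a b : Fin m) :
    (j.succAbove a : ℕ) < (j.succAbove b : ℕ) ↔ (a : ℕ) < (b : ℕ) := by
  rw [← Fin.lt_def, ← Fin.lt_def, Fin.succAbove_lt_succAbove_iff]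

@[simp] lemma lt_succAbove_iff' (j : Fin (m + 1)) (a : Fin m) :
    j < j.succAbove a ↔ (j : ℕ) ≤ (a : ℕ) := by
  rcases Fin.lt_or_le (Fin.castSucc a) j with h | h
  · rw [Fin.succAbove_of_castSucc_lt _ _ h]
    simp only [Fin.lt_def, Fin.coe_castSucc] at h ⊢
    omega
  · rw [Fin.succAbove_of_le_castSucc _ _ h]
    simp only [Fin.lt_def, Fin.le_def, Fin.coe_castSucc, Fin.val_succ] at h ⊢
    omega

/-! ### Case A : permutations fixing the last position -/

def extA (σ : Equiv.Perm (Fin (m + 1))) : Equiv.Perm (Fin (m + 2)) where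
  toFun := Fin.lastCases (Fin.last (m + 1)) (fun w => (σ w).castSucc)
  invFun := Fin.lastCases (Fin.last (m + 1)) (fun w => (σ.symm w).castSucc)
  left_inv i := by
    induction i using Fin.lastCases with
    | last => simp
    | cast w => simp
  right_inv i := by
    induction i using Fin.lastCases with
    | last => simp
    | cast w => simp

@[simp] lemma extA_last (σ : Equiv.Perm (Fin (m + 1))) :
    extA σ (Fin.last (m + 1)) = Fin.last (m + 1) := by
  simp [extA]

@[simp] lemma extA_cs (σ : Equiv.Perm (Fin (m + 1))) (w : Fin (m + 1)) :
    extA σ (Fin.castSucc w) = Fin.castSucc (σ w) := by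
  simp [extA]

lemma extA_apply_val (σ : Equiv.Perm (Fin (m + 1))) (i : Fin (m + 2)) :
    ((extA σ) i : ℕ) = if h : (i : ℕ) < m + 1 then (σ ⟨(i : ℕ), h⟩ : ℕ) else m + 1 := by
  induction i using Fin.lastCases with
  | last =>
    rw [extA_last]
    simp
  | cast w =>
    rw [extA_cs]
    rw [dif_pos (show ((Fin.castSucc w : Fin (m+2)) : ℕ) < m + 1 by simpa using w.is_le)]
    simp

lemma extA_injective : Function.Injective (extA (m := m)) := by
  intro σ1 σ2 h
  ext w
  have := congrArg (fun f : Equiv.Perm (Fin (m+2)) => f (Fin.castSucc w)) h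
  simp only [extA_cs] at this
  exact congrArg Fin.val (Fin.castSucc_injective _ this)

lemma good_extA (σ : Equiv.Perm (Fin (m + 1))) : Good (extA σ) ↔ Good σ := by
  constructor
  · intro hg w hw
    have h2 := hg ⟨(w : ℕ), by omega⟩ (show (w : ℕ) + 2 < m + 2 by omega)
    simp only [extA_apply_val, Fin.val_mk] at h2
    rw [dif_pos (show (w : ℕ) < m + 1 by omega), dif_pos (show (w : ℕ) + 1 < m + 1 by omega),
      dif_pos (show (w : ℕ) + 2 < m + 1 from hw)] at h2
    exact h2
  · intro hg i h
    simp only [extA_apply_val, Fin.val_mk]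
    rw [dif_pos (show (i : ℕ) < m + 1 by omega), dif_pos (show (i : ℕ) + 1 < m + 1 by omega)]
    by_cases c3 : (i : ℕ) + 2 < m + 1
    · rw [dif_pos c3]
      exact hg ⟨(i : ℕ), by omega⟩ (show (i : ℕ) + 2 < m + 1 from c3)
    · rw [dif_neg c3]
      right; exact (σ _).isLt

def resA (π : Equiv.Perm (Fin (m + 2))) (hπ : π (Fin.last (m + 1)) = Fin.last (m + 1)) :
    Equiv.Perm (Fin (m + 1)) where
  toFun w := (π w.castSucc).castPred
    (fun he => (Fin.castSucc_lt_last w).ne (π.injective (he.trans hπ.symm)))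
  invFun w := (π.symm w.castSucc).castPred
    (by
      intro he
      apply (Fin.castSucc_lt_last w).ne
      have := congrArg π he
      rwa [Equiv.apply_symm_apply, hπ] at this)
  left_inv w := by simp [Fin.castSucc_castPred]
  right_inv w := by simp [Fin.castSucc_castPred]

lemma extA_resA (π : Equiv.Perm (Fin (m + 2))) (hπ : π (Fin.last (m + 1)) = Fin.last (m + 1)) :
    extA (resA π hπ) = π := by
  apply Equiv.ext
  intro i
  induction i using Fin.lastCases with
  | last => rw [extA_last, hπ]
  | cast w =>
    rw [extA_cs]
    simp [resA, Fin.castSucc_castPred]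

lemma inv_extA (σ : Equiv.Perm (Fin (m + 1))) : inversions (extA σ) = inversions σ := by
  rw [inversions_eq_sum, inversions_eq_sum]
  simp only [Fin.sum_univ_castSucc]
  simp [Fin.castSucc_lt_castSucc_iff, Fin.castSucc_lt_last]

/-! ### Case B : permutations with the maximum in next-to-last position -/

def extB (j : Fin (m + 1)) (σ : Equiv.Perm (Fin m)) : Equiv.Perm (Fin (m + 2)) where
  toFun := Fin.lastCases j.castSucc
    (Fin.lastCases (Fin.last (m + 1)) (fun w => (j.succAbove (σ w)).castSucc))
  invFun := Fin.lastCases (Fin.last m).castSucc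
    (fun v => ((finSuccEquiv' j) v).elim (Fin.last (m + 1))
      (fun w => ((σ.symm w).castSucc).castSucc))
  left_inv i := by
    induction i using Fin.lastCases with
    | last => simp [finSuccEquiv'_at]
    | cast i' =>
      induction i' using Fin.lastCases with
      | last => simp
      | cast w => simp [finSuccEquiv'_succAbove]
  right_inv v := by
    induction v using Fin.lastCases with
    | last => simp
    | cast v' =>
      simp only [Fin.lastCases_castSucc]
      rcases h : finSuccEquiv' j v' with _ | w
      · have hv : v' = j := by
          rw [← Equiv.symm_apply_apply (finSuccEquiv' j) v', h, finSuccEquiv'_symm_none]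
        simp [hv]
      · have hv : v' = j.succAbove w := by
          rw [← Equiv.symm_apply_apply (finSuccEquiv' j) v', h, finSuccEquiv'_symm_some]
        simp [hv]

@[simp] lemma extB_last (j : Fin (m + 1)) (σ : Equiv.Perm (Fin m)) :
    extB j σ (Fin.last (m + 1)) = j.castSucc := by
  simp [extB]

@[simp] lemma extB_pm (j : Fin (m + 1)) (σ : Equiv.Perm (Fin m)) :
    extB j σ (Fin.castSucc (Fin.last m)) = Fin.last (m + 1) := by
  simp [extB]

@[simp] lemma extB_cc (j : Fin (m + 1)) (σ : Equiv.Perm (Fin m)) (w : Fin m) :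
    extB j σ (Fin.castSucc (Fin.castSucc w)) = (j.succAbove (σ w)).castSucc := by
  simp [extB]

lemma extB_apply_val (j : Fin (m + 1)) (σ : Equiv.Perm (Fin m)) (i : Fin (m + 2)) :
    ((extB j σ) i : ℕ) =
      if h : (i : ℕ) < m then (j.succAbove (σ ⟨(i : ℕ), h⟩) : ℕ)
      else if (i : ℕ) = m then m + 1 else (j : ℕ) := by
  induction i using Fin.lastCases with
  | last =>
    rw [extB_last]
    simp only [Fin.val_last, Fin.coe_castSucc]
    rw [dif_neg (by omega)]
    simp
  | cast i' =>
    induction i' using Fin.lastCases with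
    | last =>
      rw [extB_pm]
      simp only [Fin.coe_castSucc, Fin.val_last]
      rw [dif_neg (by omega)]
      simp
    | cast w =>
      rw [extB_cc]
      simp only [Fin.coe_castSucc]
      rw [dif_pos w.isLt]
      try simp

lemma good_extB (j : Fin (m + 1)) (σ : Equiv.Perm (Fin m)) : Good (extB j σ) ↔ Good σ := by
  constructor
  · intro hg w hw
    have h2 := hg ⟨(w : ℕ), by omega⟩ (show (w : ℕ) + 2 < m + 2 by omega)
    simp only [extB_apply_val, Fin.val_mk] at h2
    rw [dif_pos (show (w : ℕ) < m by omega), dif_pos (show (w : ℕ) + 1 < m by omega),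
      dif_pos (show (w : ℕ) + 2 < m from hw)] at h2
    rcases h2 with h2 | h2
    · left; exact (sa_lt_iff j _ _).mp h2
    · right; exact (sa_lt_iff j _ _).mp h2
  · intro hg i h
    simp only [extB_apply_val, Fin.val_mk]
    rw [dif_pos (show (i : ℕ) < m by omega)]
    by_cases c2 : (i : ℕ) + 1 < m
    · rw [dif_pos c2]
      by_cases c3 : (i : ℕ) + 2 < m
      · rw [dif_pos c3]
        rcases hg ⟨(i : ℕ), by omega⟩ (show (i : ℕ) + 2 < m from c3) with h2 | h2
        · left; exact (sa_lt_iff j _ _).mpr h2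
        · right; exact (sa_lt_iff j _ _).mpr h2
      · rw [dif_neg c3, if_pos (show (i : ℕ) + 2 = m by omega)]
        right; exact (j.succAbove _).isLt
    · rw [dif_neg c2, if_pos (show (i : ℕ) + 1 = m by omega),
        dif_neg (show ¬ (i : ℕ) + 2 < m by omega), if_neg (show ¬ (i : ℕ) + 2 = m by omega)]
      left; exact (j.succAbove _).isLt

lemma inv_extB (j : Fin (m + 1)) (σ : Equiv.Perm (Fin m)) :
    inversions (extB j σ) = inversions σ + (m + 1 - (j : ℕ)) := by
  rw [inversions_eq_sum, inversions_eq_sum]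
  simp only [Fin.sum_univ_castSucc]
  simp only [extB_cc, extB_pm, extB_last, Fin.castSucc_lt_castSucc_iff,
    Fin.succAbove_lt_succAbove_iff, Fin.castSucc_lt_last, not_last_lt, lt_self_iff_false,
    and_false, false_and, and_true, true_and, if_false, if_true, lt_succAbove_iff']
  have hcount : (∑ w : Fin m, if (j : ℕ) ≤ ((σ w : Fin m) : ℕ) then 1 else 0) = m - (j : ℕ) := by
    rw [Equiv.sum_comp σ (fun v : Fin m => if (j : ℕ) ≤ (v : ℕ) then (1 : ℕ) else 0)]
    rw [Fin.sum_univ_eq_sum_range (fun k => if (j : ℕ) ≤ k then (1 : ℕ) else 0) m]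
    exact nat_count _ _
  simp only [Finset.sum_const_zero, add_zero, Finset.sum_boole] at *
  have hj := j.is_le
  omega

lemma extB_surj (π : Equiv.Perm (Fin (m + 2)))
    (hπ : π ((Fin.last m).castSucc) = Fin.last (m + 1)) :
    ∃ j σ, extB j σ = π := by
  set pm : Fin (m + 2) := (Fin.last m).castSucc with hpmdef
  set τ₁ : Option (Fin (m + 1)) ≃ Option (Fin (m + 1)) :=
    ((finSuccEquiv' pm).symm.trans (π : Fin (m+2) ≃ Fin (m+2))).trans (finSuccEquiv' (Fin.last (m + 1))) with hτ₁
  set ρ : Fin (m + 1) ≃ Fin (m + 1) := Equiv.removeNone τ₁ with hρ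
  have key1 : ∀ w : Fin (m + 1), π (pm.succAbove w) = Fin.castSucc (ρ w) := by
    intro w
    have hne : π (pm.succAbove w) ≠ Fin.last (m + 1) := by
      rw [← hπ]
      exact fun hcontr => Fin.succAbove_ne pm w (π.injective hcontr)
    obtain ⟨x, hx⟩ := Fin.exists_succAbove_eq hne
    rw [Fin.succAbove_last] at hx
    have hτ : τ₁ (some w) = some x := by
      simp only [hτ₁, Equiv.trans_apply, finSuccEquiv'_symm_some]
      rw [show ((π : Fin (m+2) ≃ Fin (m+2)) (pm.succAbove w)) = π (pm.succAbove w) from rfl, ← hx]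
      exact finSuccEquiv'_last_apply_castSucc x
    have hsome := Equiv.removeNone_some τ₁ ⟨x, hτ⟩
    rw [hτ] at hsome
    rw [← hx]
    exact congrArg Fin.castSucc (Option.some_injective _ hsome.symm)
  have hlastpos : pm.succAbove (Fin.last m) = Fin.last (m + 1) := by
    rw [hpmdef, Fin.succAbove_castSucc_of_le _ _ le_rfl, Fin.succ_last]
  set j : Fin (m + 1) := ρ (Fin.last m) with hj
  have hlast : π (Fin.last (m + 1)) = j.castSucc := by
    rw [← hlastpos, key1]
  set τ₂ : Option (Fin m) ≃ Option (Fin m) :=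
    ((finSuccEquiv' (Fin.last m)).symm.trans ρ).trans (finSuccEquiv' j) with hτ₂
  set σ : Fin m ≃ Fin m := Equiv.removeNone τ₂ with hσ
  have key2 : ∀ w : Fin m, ρ (Fin.castSucc w) = j.succAbove (σ w) := by
    intro w
    have hne : ρ (Fin.castSucc w) ≠ j := fun hcontr =>
      (Fin.castSucc_lt_last w).ne (ρ.injective hcontr)
    obtain ⟨x, hx⟩ := Fin.exists_succAbove_eq hne
    have hτ : τ₂ (some w) = some x := by
      simp only [hτ₂, Equiv.trans_apply, finSuccEquiv'_symm_some, Fin.succAbove_last]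
      rw [← hx]
      exact finSuccEquiv'_succAbove j x
    have hsome := Equiv.removeNone_some τ₂ ⟨x, hτ⟩
    rw [hτ] at hsome
    rw [← hx]
    exact congrArg j.succAbove (Option.some_injective _ hsome.symm)
  refine ⟨j, σ, ?_⟩
  apply Equiv.ext
  intro i
  induction i using Fin.lastCases with
  | last => rw [extB_last, hlast]
  | cast i' =>
    induction i' using Fin.lastCases with
    | last => rw [extB_pm, ← hpmdef, hπ]
    | cast w =>
      rw [extB_cc]
      have hpos : pm.succAbove (Fin.castSucc w) = Fin.castSucc (Fin.castSucc w) := by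
        rw [hpmdef]
        exact Fin.succAbove_of_castSucc_lt _ _
          (by rw [Fin.castSucc_lt_castSucc_iff]; exact Fin.castSucc_lt_last w)
      rw [← hpos, key1, key2]

lemma extB_pair_injective (x y : Fin (m + 1) × Equiv.Perm (Fin m))
    (h : extB x.1 x.2 = extB y.1 y.2) : x = y := by
  have h1 : x.1 = y.1 := by
    have := congrArg (fun f : Equiv.Perm (Fin (m+2)) => f (Fin.last (m+1))) h
    simp only [extB_last] at this
    exact Fin.castSucc_injective _ this
  have h2 : x.2 = y.2 := by
    ext w
    have := congrArg (fun f : Equiv.Perm (Fin (m+2)) => f (Fin.castSucc (Fin.castSucc w))) h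
    simp only [extB_cc] at this
    have := Fin.castSucc_injective _ this
    rw [h1] at this
    exact congrArg Fin.val (Fin.succAbove_right_injective this)
  exact Prod.ext h1 h2

/-! ### Position of the maximum -/

lemma good_pos_last {π : Equiv.Perm (Fin (m + 2))} (hg : Good π) :
    π (Fin.last (m + 1)) = Fin.last (m + 1) ∨ π ((Fin.last m).castSucc) = Fin.last (m + 1) := by
  set i := π.symm (Fin.last (m + 1)) with hidef
  have hπi : π i = Fin.last (m + 1) := Equiv.apply_symm_apply _ _
  by_cases h1 : (i : ℕ) < m
  · exfalso
    rcases hg i (by omega) with h2 | h2 <;>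
      rw [hπi, Fin.val_last] at h2 <;>
      exact absurd h2 (Nat.not_lt.mpr (Nat.lt_succ_iff.mp (π _).isLt))
  · rcases Nat.lt_or_ge (i : ℕ) (m + 1) with h2 | h2
    · right
      have hie : i = (Fin.last m).castSucc := Fin.ext (by
        simp only [Fin.coe_castSucc, Fin.val_last]
        omega)
      conv_lhs => rw [← hie]
      exact hπi
    · left
      have hie : i = Fin.last (m + 1) := Fin.ext (by
        have := i.isLt
        simp only [Fin.val_last]
        omega)
      conv_lhs => rw [← hie]
      exact hπi

/-! ### The main recurrence -/

lemma I12_filter_good (n : ℕ) :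
    I12 n = ∑ π ∈ Finset.univ.filter (fun π : Equiv.Perm (Fin n) => Good π), X ^ inversions π := by
  rw [I12, genPoly]
  congr 1
  exact Finset.filter_congr (fun π _ => by rw [good_iff])

lemma main_rec (m : ℕ) :
    I12 (m + 2) = I12 (m + 1) + (∑ k ∈ Finset.Icc 1 (m + 1), (X : Polynomial ℕ) ^ k) * I12 m := by
  rw [I12_filter_good (m + 2), I12_filter_good (m + 1), I12_filter_good m]
  set S : Finset (Equiv.Perm (Fin (m + 2))) := Finset.univ.filter (fun π => Good π) with hS
  rw [← Finset.sum_filter_add_sum_filter_not S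
    (fun π => π (Fin.last (m + 1)) = Fin.last (m + 1)) (fun π => X ^ inversions π)]
  have hNe : S.filter (fun π => ¬ π (Fin.last (m + 1)) = Fin.last (m + 1)) =
      S.filter (fun π => π ((Fin.last m).castSucc) = Fin.last (m + 1)) := by
    ext π
    simp only [Finset.mem_filter, hS, Finset.mem_univ, true_and]
    constructor
    · rintro ⟨hg, hne⟩
      rcases good_pos_last hg with hc | hc
      · exact absurd hc hne
      · exact ⟨hg, hc⟩
    · rintro ⟨hg, hpm⟩
      refine ⟨hg, fun he => ?_⟩
      have := π.injective (hpm.trans he.symm)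
      have := congrArg Fin.val this
      simp at this
  rw [hNe]
  have hA : (S.filter (fun π => π (Fin.last (m + 1)) = Fin.last (m + 1))).sum
      (fun π => (X : Polynomial ℕ) ^ inversions π) =
      ∑ σ ∈ Finset.univ.filter (fun σ : Equiv.Perm (Fin (m + 1)) => Good σ), X ^ inversions σ := by
    have himg : S.filter (fun π => π (Fin.last (m + 1)) = Fin.last (m + 1)) =
        (Finset.univ.filter (fun σ : Equiv.Perm (Fin (m + 1)) => Good σ)).image extA := by
      ext π
      simp only [Finset.mem_filter, hS, Finset.mem_univ, true_and, Finset.mem_image]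
      constructor
      · rintro ⟨hg, hl⟩
        refine ⟨resA π hl, ?_, extA_resA π hl⟩
        rw [← good_extA, extA_resA π hl]
        exact hg
      · rintro ⟨σ, hσ, rfl⟩
        exact ⟨(good_extA σ).mpr hσ, extA_last σ⟩
    rw [himg, Finset.sum_image (fun x _ y _ h => extA_injective h)]
    exact Finset.sum_congr rfl (fun σ _ => by rw [inv_extA])
  rw [hA]
  congr 1
  -- Case B
  set TB : Finset (Fin (m + 1) × Equiv.Perm (Fin m)) :=
    Finset.univ ×ˢ (Finset.univ.filter (fun σ : Equiv.Perm (Fin m) => Good σ)) with hTB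
  have himgB : S.filter (fun π => π ((Fin.last m).castSucc) = Fin.last (m + 1)) =
      TB.image (fun x => extB x.1 x.2) := by
    ext π
    constructor
    · intro hmem
      rw [Finset.mem_filter] at hmem
      obtain ⟨hgS, hpm⟩ := hmem
      rw [hS, Finset.mem_filter] at hgS
      obtain ⟨j, σ, rfl⟩ := extB_surj π hpm
      refine Finset.mem_image.mpr ⟨(j, σ), ?_, rfl⟩
      rw [hTB, Finset.mem_product]
      exact ⟨Finset.mem_univ _, Finset.mem_filter.mpr ⟨Finset.mem_univ _, (good_extB j σ).mp hgS.2⟩⟩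
    · intro hmem
      obtain ⟨x, hx, rfl⟩ := Finset.mem_image.mp hmem
      rw [hTB, Finset.mem_product, Finset.mem_filter] at hx
      rw [Finset.mem_filter, hS, Finset.mem_filter]
      refine ⟨⟨Finset.mem_univ _, (good_extB x.1 x.2).mpr hx.2.2⟩, extB_pm x.1 x.2⟩
  rw [himgB, Finset.sum_image (fun x _ y _ h => extB_pair_injective x y h)]
  have : ∀ x ∈ TB, (X : Polynomial ℕ) ^ inversions (extB x.1 x.2) =
      X ^ (m + 1 - (x.1 : ℕ)) * X ^ inversions x.2 := by
    intro x _
    rw [inv_extB, pow_add, mul_comm]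
  rw [Finset.sum_congr rfl this, hTB, Finset.sum_product]
  simp only [← Finset.mul_sum]
  rw [← Finset.sum_mul]
  congr 1
  rw [Fin.sum_univ_eq_sum_range (fun r => (X : Polynomial ℕ) ^ (m + 1 - r)) (m + 1)]
  exact Finset.sum_nbij' (i := fun r => m + 1 - r) (j := fun k => m + 1 - k)
    (fun a ha => by simp only [Finset.mem_range] at ha; simp only [Finset.mem_Icc]; omega)
    (fun a ha => by simp only [Finset.mem_Icc] at ha; simp only [Finset.mem_range]; omega)
    (fun a ha => by
      simp only [Finset.mem_range] at ha
      show m + 1 - (m + 1 - a) = a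
      omega)
    (fun a ha => by
      simp only [Finset.mem_Icc] at ha
      show m + 1 - (m + 1 - a) = a
      omega)
    (fun a ha => rfl)

end Inv12

theorem stmt12 :
    I12 0 = 1 ∧ I12 1 = 1 ∧
    ∀ n : ℕ, 2 ≤ n →
      I12 n = I12 (n - 1) + (∑ k ∈ Finset.Icc 1 (n - 1), X ^ k) * I12 (n - 2) := by
  refine ⟨?_, ?_, ?_⟩
  · rw [I12, genPoly]
    rw [Finset.filter_true_of_mem (fun π _ => ⟨fun i => i.elim0, fun i => i.elim0⟩)]
    rw [Finset.sum_congr rfl (fun π _ => by rw [Inv12.inversions_small (by norm_num) π, pow_zero])]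
    rw [Finset.sum_const, Finset.card_univ]
    simp [Fintype.card_perm]
  · rw [I12, genPoly]
    rw [Finset.filter_true_of_mem
      (fun π _ => ⟨fun i h => absurd h (by omega), fun i h => absurd h (by omega)⟩)]
    rw [Finset.sum_congr rfl (fun π _ => by rw [Inv12.inversions_small (by norm_num) π, pow_zero])]
    rw [Finset.sum_const, Finset.card_univ]
    simp [Fintype.card_perm]
  · intro n hn
    obtain ⟨m, rfl⟩ : ∃ m, n = m + 2 := ⟨n - 2, by omega⟩
    show I12 (m + 2) = I12 (m + 1) + (∑ k ∈ Finset.Icc 1 (m + 1), X ^ k) * I12 m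
    exact Inv12.main_rec m
end
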